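/- arXiv:1104.4585 — 2 statements merged into one kernel-verified Lean document; each statement's English description precedes it below -/
import Mathlib

section
/- Let A be a finitely generated torsion Λ-module and φ a non-degenerate hermitian form on A. If γ ∈ A has order P (i.e. P generates the annihilator ideal of γ in Λ), then there exists η ∈ A such that φ(γ,η) = 1/P mod Λ. -/
open LaurentPolynomial

set_option maxHeartbeats 1000000
set_option synthInstance.maxHeartbeats 400000

noncomputable section

/-- `Λ = ℚ[t,t⁻¹]`, the ring of Laurent polynomials over `ℚ`. -/
abbrev Λ : Type := LaurentPolynomial ℚ

/-- The variable `t` of `Λ`. -/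
def tΛ : Λ := T 1

/-- The involution `P(t) ↦ P(t⁻¹)` of `Λ`. -/
def lbar : Λ →+* Λ := (invert : Λ ≃ₐ[ℚ] Λ).toRingEquiv.toRingHom

/-- `P ∈ Λ` is symmetric if `P(t⁻¹) = P(t)`. -/
def SymmL (P : Λ) : Prop := lbar P = P

/-- The fraction field `ℚ(t)` of `Λ`. -/
abbrev KΛ : Type := FractionRing Λ

/-- The involution of `ℚ(t)` extending that of `Λ`. -/
def kbar : KΛ →+* KΛ :=
  (IsFractionRing.ringEquivOfRingEquiv (A := Λ) (B := Λ) (K := KΛ) (L := KΛ)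
    (invert : Λ ≃ₐ[ℚ] Λ).toRingEquiv).toRingHom

lemma kbar_algebraMap (P : Λ) : kbar (algebraMap Λ KΛ P) = algebraMap Λ KΛ (lbar P) := by
  simp [kbar, lbar]

/-- The image of `Λ` inside `ℚ(t)`, as a `Λ`-submodule of `ℚ(t)`. -/
def ΛinK : Submodule Λ KΛ := LinearMap.range (Algebra.linearMap Λ KΛ)

/-- The quotient `Λ`-module `ℚ(t)/Λ`. -/
abbrev QL : Type := KΛ ⧸ ΛinK

/-- The class in `ℚ(t)/Λ` of an element of `ℚ(t)`. -/
abbrev QLmk : KΛ →ₗ[Λ] QL := ΛinK.mkQ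

/-- The class of the fraction `P/Q` in `ℚ(t)/Λ`, for `P Q : Λ`. -/
def fracQ (P Q : Λ) : QL := QLmk (algebraMap Λ KΛ P / algebraMap Λ KΛ Q)

/-- The involution of `ℚ(t)/Λ` induced by `P(t) ↦ P(t⁻¹)`. -/
def qbar : QL → QL := fun x =>
  Quotient.liftOn x (fun a => QLmk (kbar a)) (by
    intro a b h
    obtain ⟨r, hr⟩ := (Submodule.quotientRel_def (p := ΛinK)).mp h
    apply (Submodule.Quotient.eq _).2
    refine ⟨lbar r, ?_⟩
    rw [← map_sub, ← hr]
    exact (kbar_algebraMap _).symm)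

lemma qbar_mk (a : KΛ) : qbar (QLmk a) = QLmk (kbar a) := rfl

/-- Evaluation of a Laurent polynomial at a nonzero rational number. -/
def evalL (q : ℚˣ) : Λ →ₐ[ℚ] ℚ :=
  AddMonoidAlgebra.lift ℚ ℚ ℤ ((Units.coeHom ℚ).comp (zpowersHom ℚˣ q))

/-- A hermitian form on a `Λ`-module `A`, with values in `ℚ(t)/Λ`:
it is `Λ`-linear in the first variable and conjugate-symmetric (hence
semilinear with respect to the involution in the second variable). -/
structure HermForm (A : Type*) [AddCommGroup A] [Module Λ A] where
  bil : A → A → QL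
  add_left : ∀ x y z : A, bil (x + y) z = bil x z + bil y z
  smul_left : ∀ (r : Λ) (x y : A), bil (r • x) y = r • bil x y
  conj_symm : ∀ x y : A, bil x y = qbar (bil y x)

/-- A hermitian form is non-degenerate if `φ(x,y) = 0` for all `y` implies `x = 0`. -/
def HermForm.Nondeg {A : Type*} [AddCommGroup A] [Module Λ A] (φ : HermForm A) : Prop :=
  ∀ x : A, (∀ y : A, φ.bil x y = 0) → x = 0

/-- Two hermitian forms are isometric if they differ by a `Λ`-module automorphism. -/
def HermForm.Isometric {A : Type*} [AddCommGroup A] [Module Λ A]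
    (φ₁ φ₂ : HermForm A) : Prop :=
  ∃ f : A ≃ₗ[Λ] A, ∀ x y : A, φ₂.bil x y = φ₁.bil (f x) (f y)


instance ΛisDomain : IsDomain Λ :=
  { (inferInstance : Nontrivial Λ), (inferInstance : NoZeroDivisors Λ) with }

instance ΛisPID : IsPrincipalIdealRing Λ := by
  constructor
  intro I
  haveI := LaurentPolynomial.isLocalization (R := ℚ)
  obtain ⟨g, hg⟩ := (IsPrincipalIdealRing.principal (I.comap (algebraMap (Polynomial ℚ) Λ)))
  refine ⟨algebraMap (Polynomial ℚ) Λ g, ?_⟩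
  have h := IsLocalization.map_comap (Submonoid.powers (Polynomial.X : Polynomial ℚ)) Λ I
  rw [← h, Ideal.under, hg]
  simp [Ideal.map_span, Ideal.submodule_span_eq]

lemma lbar_lbar (r : Λ) : lbar (lbar r) = r := involutive_invert r

lemma qbar_smul (r : Λ) (x : QL) : qbar (r • x) = lbar r • qbar x := by
  obtain ⟨a, rfl⟩ := ΛinK.mkQ_surjective x
  have : r • (QLmk a) = QLmk (r • a) := (map_smul QLmk r a).symm
  rw [this, qbar_mk, qbar_mk, ← map_smul]
  congr 1
  rw [Algebra.smul_def, Algebra.smul_def, map_mul, kbar_algebraMap]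

lemma qbar_add (x y : QL) : qbar (x + y) = qbar x + qbar y := by
  obtain ⟨a, rfl⟩ := ΛinK.mkQ_surjective x
  obtain ⟨b, rfl⟩ := ΛinK.mkQ_surjective y
  rw [← map_add, qbar_mk, qbar_mk, qbar_mk, map_add, map_add]

section bil
variable {A : Type*} [AddCommGroup A] [Module Λ A] (φ : HermForm A)

lemma qbar_zero : qbar (0 : QL) = 0 := by
  have h : (0 : QL) = QLmk 0 := (map_zero _).symm
  rw [h, qbar_mk, map_zero, map_zero]

lemma bil_zero_left (y : A) : φ.bil 0 y = 0 := by
  have h := φ.smul_left 0 0 y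
  simpa using h

lemma bil_zero_right (x : A) : φ.bil x 0 = 0 := by
  rw [φ.conj_symm, bil_zero_left, qbar_zero]

lemma bil_smul_right (r : Λ) (x y : A) : φ.bil x (r • y) = lbar r • φ.bil x y := by
  rw [φ.conj_symm, φ.smul_left, qbar_smul, ← φ.conj_symm]

lemma bil_add_right (x y z : A) : φ.bil x (y + z) = φ.bil x y + φ.bil x z := by
  rw [φ.conj_symm, φ.add_left, qbar_add, ← φ.conj_symm, ← φ.conj_symm]

end bil

theorem stmt_5 (A : Type) [AddCommGroup A] [Module Λ A] [Module.Finite Λ A]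
    (htors : Module.IsTorsion Λ A)
    (φ : HermForm A) (hnd : φ.Nondeg)
    (γ : A) (P : Λ) (hP : ∀ r : Λ, r • γ = 0 ↔ P ∣ r) :
    ∃ η : A, φ.bil γ η = fracQ 1 P := by
  classical
  obtain ⟨r₀, hr₀⟩ := @htors γ
  have hr₀ne : (r₀ : Λ) ≠ 0 := nonZeroDivisors.coe_ne_zero r₀
  have hPne : P ≠ 0 := by
    intro h
    obtain ⟨c, hc⟩ := (hP r₀).mp hr₀
    exact hr₀ne (by rw [hc, h, zero_mul])
  have hPK : algebraMap Λ KΛ P ≠ 0 := fun h =>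
    hPne ((IsFractionRing.to_map_eq_zero_iff (K := KΛ)).mp h)
  let I : Ideal Λ :=
    { carrier := {r | ∃ η, φ.bil γ η = fracQ r P}
      zero_mem' := ⟨0, by rw [bil_zero_right]; simp [fracQ]⟩
      add_mem' := by
        rintro a b ⟨η₁, h₁⟩ ⟨η₂, h₂⟩
        refine ⟨η₁ + η₂, ?_⟩
        rw [bil_add_right, h₁, h₂]
        unfold fracQ
        rw [map_add, add_div, map_add]
      smul_mem' := by
        rintro c x ⟨η, h⟩
        refine ⟨lbar c • η, ?_⟩
        rw [bil_smul_right, lbar_lbar, h]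
        show c • QLmk _ = QLmk _
        rw [← map_smul]
        congr 1
        rw [Algebra.smul_def, smul_eq_mul, map_mul, mul_div_assoc] }
  have hall : ∀ η : A, ∃ r : Λ, φ.bil γ η = fracQ r P := by
    intro η
    have hPγ : P • γ = 0 := (hP P).mpr dvd_rfl
    have htor : P • φ.bil γ η = 0 := by rw [← φ.smul_left, hPγ, bil_zero_left]
    obtain ⟨x, hx⟩ := ΛinK.mkQ_surjective (φ.bil γ η)
    rw [← hx, ← map_smul] at htor
    obtain ⟨r, hr⟩ := (Submodule.Quotient.mk_eq_zero _).mp htor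
    refine ⟨r, ?_⟩
    have hx2 : x = algebraMap Λ KΛ r / algebraMap Λ KΛ P := by
      rw [eq_div_iff hPK]
      have : algebraMap Λ KΛ r = algebraMap Λ KΛ P * x := by
        rw [← Algebra.smul_def]; exact hr
      rw [this, mul_comm]
    rw [← hx, hx2]; rfl
  have hPI : P ∈ I := by
    refine ⟨0, ?_⟩
    rw [bil_zero_right]
    unfold fracQ
    rw [div_self hPK]
    exact ((Submodule.Quotient.mk_eq_zero _).mpr (LinearMap.mem_range.mpr ⟨1, by simp⟩)).symm
  obtain ⟨d, hdI⟩ := IsPrincipalIdealRing.principal I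
  have hdP : d ∣ P := by
    have h := hPI
    rw [hdI] at h
    exact Ideal.mem_span_singleton.mp h
  obtain ⟨Q, hQ⟩ := hdP
  have hQne : Q ≠ 0 := fun h => hPne (by rw [hQ, h, mul_zero])
  have hdne : d ≠ 0 := fun h => hPne (by rw [hQ, h, zero_mul])
  have hdK : algebraMap Λ KΛ d ≠ 0 := fun h =>
    hdne ((IsFractionRing.to_map_eq_zero_iff (K := KΛ)).mp h)
  have hQK : algebraMap Λ KΛ Q ≠ 0 := fun h =>
    hQne ((IsFractionRing.to_map_eq_zero_iff (K := KΛ)).mp h)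
  have hzero : ∀ η, φ.bil (Q • γ) η = 0 := by
    intro η
    obtain ⟨r, hr⟩ := hall η
    have hrI : r ∈ I := by
      change ∃ η, φ.bil γ η = fracQ r P
      exact ⟨η, hr⟩
    rw [hdI] at hrI
    obtain ⟨s, hs⟩ := Ideal.mem_span_singleton.mp hrI
    rw [φ.smul_left, hr, hs, hQ]
    show Q • QLmk _ = 0
    rw [← map_smul]
    apply (Submodule.Quotient.mk_eq_zero _).mpr
    refine ⟨s, ?_⟩
    show algebraMap Λ KΛ s =
      Q • (algebraMap Λ KΛ (d * s) / algebraMap Λ KΛ (d * Q))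
    rw [Algebra.smul_def, map_mul, map_mul]
    field_simp
  have hQγ : Q • γ = 0 := hnd _ hzero
  obtain ⟨c, hc⟩ := (hP Q).mp hQγ
  have hunit : IsUnit d := by
    have h2 : Q * 1 = Q * (c * d) := by
      rw [mul_one]
      conv_lhs => rw [hc, hQ]
      ring
    have h1 : (1 : Λ) = c * d := mul_left_cancel₀ hQne h2
    exact IsUnit.of_mul_eq_one (a := d) c (by rw [mul_comm]; exact h1.symm)
  have h1I : (1 : Λ) ∈ I := by
    rw [hdI]
    exact Ideal.mem_span_singleton.mpr (isUnit_iff_dvd_one.mp hunit)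
  exact h1I
end
end

section
/- Let A = ⊕_{i∈I} Λ/((1+t)^{n_i}) with I finite and all n_i > 0, and let φ be a hermitian form on A. Then for every γ ∈ A, the element φ(γ,γ) of ℚ(t)/Λ can be written as P/(1+t)^k mod Λ with k an even non-negative integer and P ∈ Λ satisfying either P = 0 or P(−1) ≠ 0. -/
open LaurentPolynomial

set_option maxHeartbeats 1000000
set_option synthInstance.maxHeartbeats 400000

noncomputable section

/-! ### Auxiliary lemmas -/

lemma evalL_T (q : ℚˣ) (n : ℤ) : evalL q (T n) = ((q ^ n : ℚˣ) : ℚ) := by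
  rw [T, evalL, AddMonoidAlgebra.lift_single]
  simp [zpowersHom]

lemma evalL_C (q : ℚˣ) (a : ℚ) : evalL q (C a) = a := by
  rw [LaurentPolynomial.C_eq_algebraMap]; exact (evalL q).commutes a

lemma evalL_toLaurent (q : ℚˣ) (p : Polynomial ℚ) :
    evalL q (p.toLaurent) = p.eval (q : ℚ) := by
  induction p using Polynomial.induction_on with
  | C a => rw [Polynomial.toLaurent_C]; simp [evalL_C]
  | add p r hp hq => simp [hp, hq]
  | monomial n a h =>
    rw [Polynomial.toLaurent_C_mul_X_pow, map_mul, evalL_C, evalL_T,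
      Polynomial.eval_mul, Polynomial.eval_C, Polynomial.eval_pow, Polynomial.eval_X]
    norm_cast

lemma evalL_tΛ (q : ℚˣ) : evalL q tΛ = (q : ℚ) := by
  rw [tΛ, evalL_T, zpow_one]

lemma evalL_neg_one_tΛ : evalL (-1) tΛ = -1 := by
  rw [evalL_tΛ]; norm_num

lemma evalL_neg_one_one_add_t : evalL (-1) (1 + tΛ) = 0 := by
  rw [map_add, map_one, evalL_neg_one_tΛ]; norm_num

lemma one_add_t_ne_zero : (1 + tΛ) ≠ 0 := fun h => by
  have := congrArg (evalL 1) h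
  rw [map_add, map_one, map_zero, evalL_tΛ] at this
  norm_num at this

lemma dvd_of_eval_neg_one (P : Λ) (h : evalL (-1) P = 0) : (1 + tΛ) ∣ P := by
  obtain ⟨n, p, hp⟩ := P.exists_T_pow
  have hev : p.eval (-1 : ℚ) = 0 := by
    have := congrArg (evalL (-1)) hp
    rw [evalL_toLaurent, map_mul, h, zero_mul] at this
    simpa using this
  have hdvd : (Polynomial.X + Polynomial.C (1 : ℚ)) ∣ p := by
    have := (Polynomial.dvd_iff_isRoot (p := p) (a := (-1 : ℚ))).2 hev
    simpa [map_neg, sub_neg_eq_add, Polynomial.C_1] using this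
  obtain ⟨c, hc⟩ := hdvd
  have : (1 + tΛ) ∣ P * T n := by
    refine ⟨c.toLaurent, ?_⟩
    rw [← hp, hc, map_mul]
    congr 1
    simp [Polynomial.toLaurent_X, tΛ, add_comm]
  exact (isUnit_T (R := ℚ) n).dvd_mul_right.mp this

lemma evalL_invert (q : ℚˣ) (P : Λ) : evalL q ((invert : Λ ≃ₐ[ℚ] Λ) P) = evalL q⁻¹ P := by
  have h : (evalL q).comp (invert : Λ ≃ₐ[ℚ] Λ).toAlgHom = evalL q⁻¹ := by
    apply AddMonoidAlgebra.algHom_ext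
    intro n
    show evalL q ((invert : Λ ≃ₐ[ℚ] Λ) (T n)) = evalL q⁻¹ (T n)
    rw [invert_T, evalL_T, evalL_T]
    norm_cast
    rw [zpow_neg, ← inv_zpow]
    exact Subsingleton.elim _ _
  exact DFunLike.congr_fun h P

lemma evalL_lbar_neg_one (P : Λ) : evalL (-1) (lbar P) = evalL (-1) P := by
  have : lbar P = (invert : Λ ≃ₐ[ℚ] Λ) P := rfl
  rw [this, evalL_invert]
  norm_num

lemma lbar_one_add_t_mul : lbar (1 + tΛ) * tΛ = 1 + tΛ := by
  show (invert : Λ ≃ₐ[ℚ] Λ) (1 + T 1) * T 1 = 1 + T 1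
  rw [map_add, map_one, invert_T, add_mul, one_mul, ← T_add,
    show (-1 : ℤ) + 1 = 0 from by ring, T_zero, add_comm]

lemma algK_injective : Function.Injective (algebraMap Λ KΛ) := IsFractionRing.injective Λ KΛ

lemma algK_ne {P : Λ} (h : P ≠ 0) : algebraMap Λ KΛ P ≠ 0 := by
  rwa [map_ne_zero_iff _ algK_injective]

lemma pow_denom_ne (k : ℕ) : algebraMap Λ KΛ ((1 + tΛ) ^ k) ≠ 0 :=
  algK_ne (pow_ne_zero _ one_add_t_ne_zero)

lemma QLmk_algebraMap (P : Λ) : QLmk (algebraMap Λ KΛ P) = 0 := by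
  rw [Submodule.mkQ_apply, Submodule.Quotient.mk_eq_zero]
  exact ⟨P, rfl⟩

lemma fracQ_one (P : Λ) : fracQ P 1 = 0 := by
  rw [fracQ, map_one, div_one, QLmk_algebraMap]

lemma fracQ_zero_num (Q : Λ) : fracQ 0 Q = 0 := by
  rw [fracQ, map_zero, zero_div, map_zero]

lemma fracQ_cancel (P : Λ) (k : ℕ) :
    fracQ ((1 + tΛ) * P) ((1 + tΛ) ^ (k + 1)) = fracQ P ((1 + tΛ) ^ k) := by
  rw [fracQ, fracQ]
  congr 1
  rw [map_mul, map_pow, map_pow, pow_succ']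
  exact mul_div_mul_left _ _ (algK_ne one_add_t_ne_zero)

lemma symm_eq (Q : Λ) (m : ℕ)
    (hx : qbar (fracQ Q ((1 + tΛ) ^ m)) = fracQ Q ((1 + tΛ) ^ m)) :
    ∃ R : Λ, R * (1 + tΛ) ^ m = tΛ ^ m * lbar Q - Q := by
  have hd := pow_denom_ne m
  have hlbar_inj : Function.Injective (lbar : Λ →+* Λ) :=
    (invert : Λ ≃ₐ[ℚ] Λ).toRingEquiv.injective
  have hld : algebraMap Λ KΛ (lbar ((1 + tΛ) ^ m)) ≠ 0 := by
    apply algK_ne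
    intro h0
    exact pow_ne_zero m one_add_t_ne_zero (hlbar_inj (by rw [h0, map_zero]))
  have hident : (1 + tΛ) ^ m = lbar ((1 + tΛ) ^ m) * tΛ ^ m := by
    rw [map_pow, ← mul_pow, lbar_one_add_t_mul]
  have key : kbar (algebraMap Λ KΛ Q / algebraMap Λ KΛ ((1 + tΛ) ^ m))
      = algebraMap Λ KΛ (tΛ ^ m * lbar Q) / algebraMap Λ KΛ ((1 + tΛ) ^ m) := by
    rw [map_div₀, kbar_algebraMap, kbar_algebraMap, div_eq_div_iff hld hd,
      ← map_mul, ← map_mul]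
    congr 1
    conv_lhs => rw [hident]
    ring
  have hx' : QLmk (algebraMap Λ KΛ (tΛ ^ m * lbar Q) / algebraMap Λ KΛ ((1 + tΛ) ^ m))
      = QLmk (algebraMap Λ KΛ Q / algebraMap Λ KΛ ((1 + tΛ) ^ m)) := by
    have : qbar (fracQ Q ((1 + tΛ) ^ m))
        = QLmk (kbar (algebraMap Λ KΛ Q / algebraMap Λ KΛ ((1 + tΛ) ^ m))) := qbar_mk _
    rw [this, key] at hx
    exact hx
  rw [Submodule.mkQ_apply, Submodule.mkQ_apply, Submodule.Quotient.eq] at hx'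
  obtain ⟨R, hR⟩ := hx'
  have h3 : (algebraMap Λ KΛ) R = algebraMap Λ KΛ (tΛ ^ m * lbar Q - Q)
      / algebraMap Λ KΛ ((1 + tΛ) ^ m) := by
    rw [map_sub, sub_div]
    exact hR
  rw [eq_div_iff hd, ← map_mul] at h3
  exact ⟨R, algK_injective h3⟩

lemma eval_zero_of_odd (Q : Λ) (m : ℕ) (hm : Odd m)
    (hx : qbar (fracQ Q ((1 + tΛ) ^ m)) = fracQ Q ((1 + tΛ) ^ m)) :
    evalL (-1) Q = 0 := by
  obtain ⟨R, hR⟩ := symm_eq Q m hx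
  have hm0 : m ≠ 0 := by rcases hm with ⟨c, rfl⟩; omega
  have := congrArg (evalL (-1)) hR
  rw [map_mul, map_pow, evalL_neg_one_one_add_t, map_sub, map_mul, map_pow,
    evalL_neg_one_tΛ, evalL_lbar_neg_one, hm.neg_one_pow, zero_pow hm0] at this
  linarith [this]

lemma main_ind (x : QL) (hx : qbar x = x) (N : ℕ) :
    ∀ Q : Λ, x = fracQ Q ((1 + tΛ) ^ N) →
    ∃ (k : ℕ) (P : Λ), Even k ∧ (P = 0 ∨ evalL (-1) P ≠ 0) ∧ x = fracQ P ((1 + tΛ) ^ k) := by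
  induction N with
  | zero =>
    intro Q h
    refine ⟨0, 0, Even.zero, Or.inl rfl, ?_⟩
    rw [h, pow_zero, fracQ_one, fracQ_zero_num]
  | succ N ih =>
    intro Q h
    by_cases hQ : evalL (-1) Q = 0
    · obtain ⟨Q', hQ'⟩ := dvd_of_eval_neg_one Q hQ
      exact ih Q' (by rw [h, hQ', fracQ_cancel])
    · rcases Nat.even_or_odd (N + 1) with he | ho
      · exact ⟨N + 1, Q, he, Or.inr hQ, h⟩
      · exact absurd (eval_zero_of_odd Q (N + 1) ho (h ▸ hx)) hQ

/-- on `⊕ Λ/((1+t)^{nᵢ})`, diagonal values of a hermitian form have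
even `(1+t)`-denominator. -/
theorem stmt_18 (I : Type) [Fintype I] (n : I → ℕ) (hn : ∀ i, 0 < n i)
    (φ : HermForm (∀ i : I, Λ ⧸ (Ideal.span {(1 + tΛ) ^ n i} : Ideal Λ)))
    (γ : ∀ i : I, Λ ⧸ (Ideal.span {(1 + tΛ) ^ n i} : Ideal Λ)) :
    ∃ (k : ℕ) (P : Λ), Even k ∧ (P = 0 ∨ evalL (-1) P ≠ 0) ∧
      φ.bil γ γ = fracQ P ((1 + tΛ) ^ k) := by
  classical
  set N := Finset.univ.sup n with hN
  have hann : ((1 + tΛ) ^ N) • γ = 0 := by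
    funext i
    rw [Pi.smul_apply, Pi.zero_apply]
    obtain ⟨x, hxi⟩ := Submodule.Quotient.mk_surjective _ (γ i)
    rw [← hxi]
    have h0 : ((1 + tΛ) ^ n i) • (Submodule.Quotient.mk x :
        Λ ⧸ (Ideal.span {(1 + tΛ) ^ n i} : Ideal Λ)) = 0 := by
      rw [← Submodule.Quotient.mk_smul, Submodule.Quotient.mk_eq_zero]
      exact Ideal.mem_span_singleton.2 (by simpa [smul_eq_mul] using dvd_mul_right ((1 + tΛ) ^ n i) x)
    have hle : n i ≤ N := Finset.le_sup (Finset.mem_univ i)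
    rw [show N = (N - n i) + n i from (Nat.sub_add_cancel hle).symm, pow_add, mul_smul, h0,
      smul_zero]
  have hzero : φ.bil 0 γ = 0 := by
    have := φ.add_left 0 0 γ
    simpa using this
  have h1 : ((1 + tΛ) ^ N) • φ.bil γ γ = 0 := by
    rw [← φ.smul_left, hann, hzero]
  obtain ⟨a, ha⟩ := Submodule.Quotient.mk_surjective ΛinK (φ.bil γ γ)
  have ha' : QLmk a = φ.bil γ γ := ha
  have h2 : QLmk (((1 + tΛ) ^ N) • a) = 0 := by
    rw [map_smul, ha', h1]
  rw [Submodule.mkQ_apply, Submodule.Quotient.mk_eq_zero] at h2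
  obtain ⟨Q, hQ⟩ := h2
  have hQ' : algebraMap Λ KΛ Q = algebraMap Λ KΛ ((1 + tΛ) ^ N) * a := by
    rw [← Algebra.smul_def]; exact hQ
  have haval : a = algebraMap Λ KΛ Q / algebraMap Λ KΛ ((1 + tΛ) ^ N) := by
    rw [eq_div_iff (pow_denom_ne N), hQ', mul_comm]
  have hfrac : φ.bil γ γ = fracQ Q ((1 + tΛ) ^ N) := by
    rw [← ha', fracQ, haval]
  have hsym : qbar (φ.bil γ γ) = φ.bil γ γ := (φ.conj_symm γ γ).symm
  exact main_ind (φ.bil γ γ) hsym N Q hfrac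
end
end
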